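/- Let (X_n)_{n≥1} be a monotone (nondecreasing or nonincreasing) sequence of nonnegative random variables on a probability space. Then almost surely limsup_{n→∞} log X_n / log n ≤ limsup_{n→∞} log E[X_n] / log n. -/

import Mathlib

open Filter MeasureTheory
open scoped ENNReal NNReal

private lemma ereal_le_of_forall_rat {x y : EReal}
    (h : ∀ q : ℚ, y < ((q : ℝ) : EReal) → x ≤ ((q : ℝ) : EReal)) : x ≤ y := by
  by_contra hxy
  push_neg at hxy
  obtain ⟨q, h1, h2⟩ := EReal.exists_rat_btwn_of_lt hxy
  exact absurd (lt_of_le_of_lt (h q h1) h2) (lt_irrefl _)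

/-- Deterministic interpolation: from a dyadic growth bound and monotonicity,
deduce a polynomial growth bound along all integers. -/
private lemma interp_aux {Y : ℕ → ℝ} (hm : Monotone Y ∨ Antitone Y) {b q : ℝ} (hbq : b < q)
    (h : ∀ᶠ k : ℕ in atTop, Y (2 ^ k) ≤ (2 : ℝ) ^ ((k : ℝ) * b)) :
    ∀ᶠ n in atTop, Y n ≤ (n : ℝ) ^ q := by
  obtain ⟨K, hK⟩ := eventually_atTop.1 h
  obtain ⟨k₁, hk₁⟩ := exists_nat_ge ((|b| + |q|) / (q - b))
  rw [eventually_atTop]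
  refine ⟨2 ^ (K + k₁ + 1), fun n hn => ?_⟩
  have hn1 : 1 ≤ n := le_trans Nat.one_le_two_pow hn
  set k := Nat.log 2 n with hkdef
  have hkK : K + k₁ + 1 ≤ k := (Nat.le_log_iff_pow_le one_lt_two (by omega)).2 hn
  have h1 : 2 ^ k ≤ n := Nat.pow_log_le_self 2 (by omega)
  have h2 : n < 2 ^ (k + 1) := Nat.lt_pow_succ_log_self one_lt_two n
  have hlog2 : (0 : ℝ) < Real.log 2 := Real.log_pos one_lt_two
  have hnpos : (0 : ℝ) < (n : ℝ) := by exact_mod_cast Nat.lt_of_lt_of_le Nat.zero_lt_one hn1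
  set L := Real.log n with hL
  have hl1 : (k : ℝ) * Real.log 2 ≤ L := by
    have h' : ((2 : ℝ) ^ k) ≤ (n : ℝ) := by exact_mod_cast h1
    have := Real.log_le_log (by positivity) h'
    rwa [Real.log_pow] at this
  have hl2 : L ≤ ((k : ℝ) + 1) * Real.log 2 := by
    have h' : (n : ℝ) ≤ (2 : ℝ) ^ (k + 1) := by exact_mod_cast h2.le
    have := Real.log_le_log hnpos h'
    rw [Real.log_pow] at this
    rw [hL]
    push_cast at this ⊢
    linarith
  have hkq : |b| + |q| ≤ (k : ℝ) * (q - b) := by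
    have hk₁k : (k₁ : ℝ) ≤ (k : ℝ) := by exact_mod_cast (by omega : k₁ ≤ k)
    have hqb : (0 : ℝ) < q - b := by linarith
    have := (div_le_iff₀ hqb).1 (hk₁.trans hk₁k)
    linarith
  rcases hm with hmono | hanti
  · -- monotone case : Y n ≤ Y (2 ^ (k+1))
    have hYn : Y n ≤ Y (2 ^ (k + 1)) := hmono h2.le
    have hb2 : Y (2 ^ (k + 1)) ≤ (2 : ℝ) ^ (((k + 1 : ℕ) : ℝ) * b) := hK (k + 1) (by omega)
    have hexp : Real.log 2 * ((((k : ℝ) + 1)) * b) ≤ L * q := by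
      rcases le_or_gt 0 q with hq | hq
      · nlinarith [mul_nonneg hq (by linarith : (0 : ℝ) ≤ L - (k : ℝ) * Real.log 2),
          mul_nonneg hlog2.le
            (by nlinarith [le_abs_self b, abs_nonneg q] : (0 : ℝ) ≤ (k : ℝ) * q - ((k : ℝ) + 1) * b)]
      · nlinarith [mul_nonneg (by linarith : (0 : ℝ) ≤ -q)
            (by linarith : (0 : ℝ) ≤ ((k : ℝ) + 1) * Real.log 2 - L),
          mul_nonneg (mul_nonneg hlog2.le (by positivity : (0 : ℝ) ≤ (k : ℝ) + 1))
            (by linarith : (0 : ℝ) ≤ q - b)]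
    calc Y n ≤ (2 : ℝ) ^ (((k + 1 : ℕ) : ℝ) * b) := hYn.trans hb2
      _ = Real.exp (Real.log 2 * ((((k : ℝ) + 1)) * b)) := by
          rw [Real.rpow_def_of_pos two_pos]; push_cast; ring_nf
      _ ≤ Real.exp (L * q) := Real.exp_le_exp.2 hexp
      _ = (n : ℝ) ^ q := by rw [Real.rpow_def_of_pos hnpos]
  · -- antitone case : Y n ≤ Y (2 ^ k)
    have hYn : Y n ≤ Y (2 ^ k) := hanti h1
    have hb2 : Y (2 ^ k) ≤ (2 : ℝ) ^ ((k : ℝ) * b) := hK k (by omega)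
    have hexp : Real.log 2 * ((k : ℝ) * b) ≤ L * q := by
      rcases le_or_gt 0 q with hq | hq
      · nlinarith [mul_nonneg hq (by linarith : (0 : ℝ) ≤ L - (k : ℝ) * Real.log 2),
          mul_nonneg (mul_nonneg hlog2.le (by positivity : (0 : ℝ) ≤ (k : ℝ)))
            (by linarith : (0 : ℝ) ≤ q - b)]
      · nlinarith [mul_nonneg (by linarith : (0 : ℝ) ≤ -q)
            (by linarith : (0 : ℝ) ≤ ((k : ℝ) + 1) * Real.log 2 - L),
          mul_nonneg hlog2.le
            (by nlinarith [neg_abs_le q, le_abs_self b, abs_nonneg b] :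
              (0 : ℝ) ≤ (k : ℝ) * (q - b) + q)]
    calc Y n ≤ (2 : ℝ) ^ ((k : ℝ) * b) := hYn.trans hb2
      _ = Real.exp (Real.log 2 * ((k : ℝ) * b)) := by rw [Real.rpow_def_of_pos two_pos]
      _ ≤ Real.exp (L * q) := Real.exp_le_exp.2 hexp
      _ = (n : ℝ) ^ q := by rw [Real.rpow_def_of_pos hnpos]

/-- From a polynomial growth bound, deduce the limsup bound on `log Y n / log n`. -/
private lemma limsup_aux {Y : ℕ → ℝ} {q : ℝ} (h : ∀ᶠ n in atTop, Y n ≤ (n : ℝ) ^ q) :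
    limsup (fun n : ℕ =>
      ENNReal.log (ENNReal.ofReal (Y n)) * (((Real.log n)⁻¹ : ℝ) : EReal)) atTop
      ≤ ((q : ℝ) : EReal) := by
  refine limsup_le_of_le (by isBoundedDefault) ?_
  filter_upwards [h, eventually_ge_atTop 2] with n hn h2
  have hn1 : (1 : ℝ) < (n : ℝ) := by exact_mod_cast h2
  have hnpos : (0 : ℝ) < (n : ℝ) := by linarith
  have hlogn : 0 < Real.log n := Real.log_pos hn1
  have step2 : ENNReal.log (ENNReal.ofReal (Y n)) ≤ ((q * Real.log n : ℝ) : EReal) := by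
    refine le_trans (ENNReal.log_monotone (ENNReal.ofReal_le_ofReal hn)) ?_
    rw [ENNReal.log_ofReal_of_pos (Real.rpow_pos_of_pos hnpos q), Real.log_rpow hnpos]
  calc ENNReal.log (ENNReal.ofReal (Y n)) * (((Real.log n)⁻¹ : ℝ) : EReal)
      ≤ ((q * Real.log n : ℝ) : EReal) * (((Real.log n)⁻¹ : ℝ) : EReal) :=
        mul_le_mul_of_nonneg_right step2 (by exact_mod_cast inv_nonneg.2 hlogn.le)
    _ = ((q : ℝ) : EReal) := by
        rw [← EReal.coe_mul]
        congr 1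
        field_simp

/-- For a monotone sequence of nonnegative random variables,
almost surely `limsup (log X_n / log n) ≤ limsup (log E[X_n] / log n)`,
with limsup taken in the extended reals and the convention `log 0 = -∞`
(realized via `ENNReal.log`). -/
theorem limsup_log_le_limsup_log_expectation
    {Ω : Type*} [MeasurableSpace Ω] (μ : Measure Ω) [IsProbabilityMeasure μ]
    (X : ℕ → Ω → ℝ) (hmeas : ∀ n, Measurable (X n))
    (hnonneg : ∀ n ω, 0 ≤ X n ω)
    (hmono : (∀ ω, Monotone fun n => X n ω) ∨ (∀ ω, Antitone fun n => X n ω)) :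
    ∀ᵐ ω ∂μ,
      limsup (fun n : ℕ =>
          ENNReal.log (ENNReal.ofReal (X n ω)) * (((Real.log n)⁻¹ : ℝ) : EReal)) atTop
        ≤ limsup (fun n : ℕ =>
          ENNReal.log (∫⁻ x, ENNReal.ofReal (X n x) ∂μ)
            * (((Real.log n)⁻¹ : ℝ) : EReal)) atTop := by
  have key : ∀ q : ℚ,
      limsup (fun n : ℕ => ENNReal.log (∫⁻ x, ENNReal.ofReal (X n x) ∂μ)
          * (((Real.log n)⁻¹ : ℝ) : EReal)) atTop < ((q : ℝ) : EReal) →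
      ∀ᵐ ω ∂μ, limsup (fun n : ℕ =>
          ENNReal.log (ENNReal.ofReal (X n ω)) * (((Real.log n)⁻¹ : ℝ) : EReal)) atTop
        ≤ ((q : ℝ) : EReal) := by
    intro q hq
    obtain ⟨a, haR, haq⟩ := EReal.exists_rat_btwn_of_lt hq
    have haq' : (a : ℝ) < (q : ℝ) := by exact_mod_cast haq
    set b : ℝ := ((a : ℝ) + (q : ℝ)) / 2 with hbdef
    have hab : (a : ℝ) < b := by rw [hbdef]; linarith
    have hbq : b < (q : ℝ) := by rw [hbdef]; linarith
    -- Step 1 : eventually E n ≤ n ^ a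
    have hEa : ∀ᶠ n in atTop,
        (∫⁻ x, ENNReal.ofReal (X n x) ∂μ) ≤ ((n : ℕ) : ℝ≥0∞) ^ (a : ℝ) := by
      filter_upwards [eventually_lt_of_limsup_lt haR, eventually_ge_atTop 2] with n h1 h2
      have hn1 : (1 : ℝ) < (n : ℝ) := by exact_mod_cast h2
      have hnpos : (0 : ℝ) < (n : ℝ) := by linarith
      have hlog : 0 < Real.log n := Real.log_pos hn1
      have hle : ENNReal.log (∫⁻ x, ENNReal.ofReal (X n x) ∂μ)
          ≤ (((a : ℝ) * Real.log n : ℝ) : EReal) := by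
        by_contra hcon
        push_neg at hcon
        have hcontr : ((a : ℝ) : EReal)
            ≤ ENNReal.log (∫⁻ x, ENNReal.ofReal (X n x) ∂μ)
              * (((Real.log n)⁻¹ : ℝ) : EReal) := by
          calc ((a : ℝ) : EReal)
              = (((a : ℝ) * Real.log n * (Real.log n)⁻¹ : ℝ) : EReal) := by
                congr 1; field_simp
            _ = (((a : ℝ) * Real.log n : ℝ) : EReal) * (((Real.log n)⁻¹ : ℝ) : EReal) :=
                EReal.coe_mul _ _
            _ ≤ _ := mul_le_mul_of_nonneg_right hcon.le
                (by exact_mod_cast inv_nonneg.2 hlog.le)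
        exact absurd (lt_of_le_of_lt hcontr h1) (lt_irrefl _)
      rw [← ENNReal.log_le_log_iff, ENNReal.log_rpow]
      have hlogn : ENNReal.log ((n : ℕ) : ℝ≥0∞) = ((Real.log n : ℝ) : EReal) := by
        rw [← ENNReal.ofReal_natCast, ENNReal.log_ofReal_of_pos hnpos]
      rw [hlogn, ← EReal.coe_mul]
      exact hle
    -- Step 2 : Borel-Cantelli along dyadics
    have htend : Tendsto (fun k : ℕ => 2 ^ k) atTop atTop :=
      tendsto_pow_atTop_atTop_of_one_lt one_lt_two
    obtain ⟨K, hK⟩ := eventually_atTop.1 (htend.eventually hEa)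
    set s : ℕ → Set Ω := fun k =>
      {ω | (2 : ℝ≥0∞) ^ ((k : ℝ) * b) ≤ ENNReal.ofReal (X (2 ^ k) ω)} with hsdef
    set r : ℝ≥0∞ := (2 : ℝ≥0∞) ^ ((a : ℝ) - b) with hrdef
    have hr1 : r < 1 := by
      rw [hrdef]
      calc (2 : ℝ≥0∞) ^ ((a : ℝ) - b) < (2 : ℝ≥0∞) ^ (0 : ℝ) :=
        ENNReal.rpow_lt_rpow_of_exponent_lt (by norm_num) ENNReal.ofNat_ne_top (by linarith)
      _ = 1 := ENNReal.rpow_zero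
    have hμs : ∀ k, K ≤ k → μ (s k) ≤ r ^ k := by
      intro k hk
      have hε0 : (2 : ℝ≥0∞) ^ ((k : ℝ) * b) ≠ 0 := by
        simp [ENNReal.rpow_eq_zero_iff]
      have hεtop : (2 : ℝ≥0∞) ^ ((k : ℝ) * b) ≠ ⊤ := by
        simp [ENNReal.rpow_eq_top_iff]
      have hmark := meas_ge_le_lintegral_div (μ := μ)
        ((hmeas (2 ^ k)).ennreal_ofReal).aemeasurable hε0 hεtop
      refine le_trans hmark ?_
      calc (∫⁻ x, ENNReal.ofReal (X (2 ^ k) x) ∂μ) / (2 : ℝ≥0∞) ^ ((k : ℝ) * b)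
          ≤ (((2 ^ k : ℕ) : ℝ≥0∞) ^ (a : ℝ)) / (2 : ℝ≥0∞) ^ ((k : ℝ) * b) :=
            ENNReal.div_le_div_right (hK k hk) _
        _ = r ^ k := by
            have h2k : ((2 ^ k : ℕ) : ℝ≥0∞) = (2 : ℝ≥0∞) ^ ((k : ℕ) : ℝ) := by
              rw [ENNReal.rpow_natCast]; push_cast; ring
            rw [h2k, ← ENNReal.rpow_mul, div_eq_mul_inv, ← ENNReal.rpow_neg,
              ← ENNReal.rpow_add _ _ two_ne_zero ENNReal.ofNat_ne_top,
              show ((k : ℕ) : ℝ) * (a : ℝ) + -((k : ℝ) * b) = ((a : ℝ) - b) * (k : ℕ) by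
                push_cast; ring,
              ENNReal.rpow_mul, ENNReal.rpow_natCast]
    have hsum : (∑' k : ℕ, μ (s (k + K))) ≠ ⊤ := by
      have hb' : ∀ k : ℕ, μ (s (k + K)) ≤ r ^ k := by
        intro k
        refine le_trans (hμs (k + K) (by omega)) ?_
        exact pow_le_pow_of_le_one zero_le hr1.le (by omega)
      refine ne_top_of_le_ne_top ?_ (ENNReal.tsum_le_tsum hb')
      rw [ENNReal.tsum_geometric]
      exact ENNReal.inv_ne_top.2 (ne_of_gt (tsub_pos_of_lt hr1))
    have hBC := ae_eventually_notMem (μ := μ) hsum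
    filter_upwards [hBC] with ω hω
    -- Step 3 : convert to a real dyadic bound
    have hd : ∀ᶠ k : ℕ in atTop, X (2 ^ k) ω ≤ (2 : ℝ) ^ ((k : ℝ) * b) := by
      obtain ⟨K₁, hK₁⟩ := eventually_atTop.1 hω
      refine eventually_atTop.2 ⟨K₁ + K, fun k hk => ?_⟩
      have hmem := hK₁ (k - K) (by omega)
      have hkk : k - K + K = k := by omega
      rw [hkk] at hmem
      have hlt : ENNReal.ofReal (X (2 ^ k) ω) < (2 : ℝ≥0∞) ^ ((k : ℝ) * b) :=
        not_le.1 hmem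
      have hth : (2 : ℝ≥0∞) ^ ((k : ℝ) * b) = ENNReal.ofReal ((2 : ℝ) ^ ((k : ℝ) * b)) := by
        rw [← ENNReal.ofReal_rpow_of_pos two_pos, ENNReal.ofReal_ofNat]
      rw [hth] at hlt
      exact ((ENNReal.ofReal_lt_ofReal_iff (Real.rpow_pos_of_pos two_pos _)).1 hlt).le
    -- Step 4 : interpolation and limsup bound
    have hm' : Monotone (fun n => X n ω) ∨ Antitone (fun n => X n ω) :=
      hmono.imp (fun h => h ω) (fun h => h ω)
    exact limsup_aux (interp_aux hm' hbq hd)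
  have hall : ∀ᵐ ω ∂μ, ∀ q : ℚ,
      limsup (fun n : ℕ => ENNReal.log (∫⁻ x, ENNReal.ofReal (X n x) ∂μ)
          * (((Real.log n)⁻¹ : ℝ) : EReal)) atTop < ((q : ℝ) : EReal) →
      limsup (fun n : ℕ =>
          ENNReal.log (ENNReal.ofReal (X n ω)) * (((Real.log n)⁻¹ : ℝ) : EReal)) atTop
        ≤ ((q : ℝ) : EReal) := by
    rw [ae_all_iff]
    intro q
    by_cases hq : limsup (fun n : ℕ => ENNReal.log (∫⁻ x, ENNReal.ofReal (X n x) ∂μ)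
        * (((Real.log n)⁻¹ : ℝ) : EReal)) atTop < ((q : ℝ) : EReal)
    · filter_upwards [key q hq] with ω h _
      exact h
    · filter_upwards with ω h
      exact absurd h hq
  filter_upwards [hall] with ω hω
  exact ereal_le_of_forall_rat fun q hq => hω q hq
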